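/- On a graph with a single vertex v of weight h and g − h loops attached to v (0 ≤ h ≤ g, g ≥ 2), the divisor d·v with 0 ≤ d ≤ 2g − 2 has combinatorial rank ⌊d/2⌋. -/

import Mathlib

open Finset

/-- The order of the rational function `f` at the vertex `v`, for the graph with
edge multiplicities `m`:  `ord_v(f) = ∑_{w ≠ v} (f(v) - f(w))·(v·w)`. -/
def ordAt {V : Type*} [Fintype V] (m : V → V → ℕ) (f : V → ℤ) (v : V) : ℤ :=
  ∑ w, (f v - f w) * (m v w : ℤ)

/-- The divisor of the rational function `f`. -/
def divOf {V : Type*} [Fintype V] (m : V → V → ℕ) (f : V → ℤ) : V → ℤ :=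
  fun v => ordAt m f v

/-- The degree of a divisor. -/
def degOf {V : Type*} [Fintype V] (d : V → ℤ) : ℤ := ∑ v, d v

/-- A divisor is principal if it is the divisor of some rational function. -/
def IsPrincipal {V : Type*} [Fintype V] (m : V → V → ℕ) (d : V → ℤ) : Prop :=
  ∃ f : V → ℤ, d = divOf m f

/-- Linear equivalence of divisors. -/
def LinEquiv {V : Type*} [Fintype V] (m : V → V → ℕ) (d d' : V → ℤ) : Prop :=
  IsPrincipal m (d - d')

/-- `rankGE m d k` : every effective divisor of degree `k` is dominated by some
divisor linearly equivalent to `d`. -/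
def rankGE {V : Type*} [Fintype V] (m : V → V → ℕ) (d : V → ℤ) (k : ℕ) : Prop :=
  ∀ e : V → ℤ, (∀ v, 0 ≤ e v) → degOf e = (k : ℤ) →
    ∃ d' : V → ℤ, LinEquiv m d d' ∧ ∀ v, e v ≤ d' v

/-- The Baker–Norine combinatorial rank of a divisor: the largest `k ≥ 0` such that
every effective divisor of degree `k` is dominated by a divisor equivalent to `d`,
and `-1` if there is no such `k`. -/
noncomputable def bnRank {V : Type*} [Fintype V] (m : V → V → ℕ) (d : V → ℤ) : ℤ :=
  sSup ({-1} ∪ {k : ℤ | 0 ≤ k ∧ rankGE m d k.toNat})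

/-- Connectivity of the (multi)graph with edge multiplicities `m`. -/
def Conn {V : Type*} [Fintype V] (m : V → V → ℕ) : Prop :=
  ∀ u v : V, Relation.ReflTransGen (fun a b => 0 < m a b) u v

/-- The weightless loopless model `G•` of the graph with one vertex and `g` loops
(counting weight): a central vertex `none` joined to each of `g` outer vertices by
a double edge. -/
def oneVertexModel (g : ℕ) : Option (Fin g) → Option (Fin g) → ℕ :=
  fun x y => match x, y with
    | none, some _ => 2
    | some _, none => 2
    | _, _ => 0

section Aux

lemma divOf_ovm_none (g : ℕ) (f : Option (Fin g) → ℤ) :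
    divOf (oneVertexModel g) f none = ∑ i : Fin g, (f none - f (some i)) * 2 := by
  show (∑ w : Option (Fin g), (f none - f w) * (oneVertexModel g none w : ℤ))
      = ∑ i : Fin g, (f none - f (some i)) * 2
  rw [Fintype.sum_option]
  simp [oneVertexModel]

lemma divOf_ovm_some (g : ℕ) (f : Option (Fin g) → ℤ) (i : Fin g) :
    divOf (oneVertexModel g) f (some i) = (f (some i) - f none) * 2 := by
  show (∑ w : Option (Fin g), (f (some i) - f w) * (oneVertexModel g (some i) w : ℤ))
      = (f (some i) - f none) * 2
  rw [Fintype.sum_option]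
  simp [oneVertexModel]

lemma sum_indicator_fin (g K : ℕ) (h : K ≤ g) :
    ∑ i : Fin g, (if (i : ℕ) < K then (1:ℤ) else 0) = K := by
  rw [Fin.sum_univ_eq_sum_range (fun i => if i < K then (1:ℤ) else 0)]
  simp only [← Finset.mem_range, Finset.sum_ite_mem]
  rw [Finset.inter_eq_right.mpr (Finset.range_subset_range.mpr h)]
  simp

lemma rankGE_mono {V : Type*} [Fintype V] [DecidableEq V] [Nonempty V] (m : V → V → ℕ) (D : V → ℤ)
    {j k : ℕ} (hjk : j ≤ k) (h : rankGE m D k) : rankGE m D j := by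
  intro e he hdeg
  obtain ⟨v0⟩ := ‹Nonempty V›
  have hnn : (0:ℤ) ≤ (k : ℤ) - (j : ℤ) := by
    have := hjk; omega
  obtain ⟨d', hlin, hdom⟩ :=
    h (fun v => e v + if v = v0 then ((k:ℤ) - j) else 0)
      (fun v => by
        have := he v
        try dsimp only
        split <;> omega)
      (by
        unfold degOf at hdeg ⊢
        rw [Finset.sum_add_distrib, hdeg, Finset.sum_ite_eq' Finset.univ v0]
        simp)
  refine ⟨d', hlin, fun v => le_trans ?_ (hdom v)⟩
  have : (0:ℤ) ≤ if v = v0 then ((k:ℤ) - j) else 0 := by split <;> omega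
  omega

lemma ovm_rank_lb (g : ℕ) (d : ℤ) (k : ℕ) (hk : 2*(k:ℤ) ≤ d) :
    rankGE (oneVertexModel g) (fun x : Option (Fin g) => if x = none then d else 0) k := by
  intro e he hdeg
  set f : Option (Fin g) → ℤ := fun x => match x with
    | none => 0
    | some i => -((e (some i) + 1)/2) with hf
  refine ⟨(fun x : Option (Fin g) => if x = none then d else 0) - divOf (oneVertexModel g) f,
    ⟨f, by rw [sub_sub_cancel]⟩, ?_⟩
  have hdeg' : e none + ∑ i : Fin g, e (some i) = (k : ℤ) := by
    unfold degOf at hdeg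
    rw [Fintype.sum_option] at hdeg
    exact hdeg
  intro v
  match v with
  | none =>
      have hsum : ∑ i : Fin g, (f none - f (some i)) * 2 ≤ ∑ i : Fin g, 2 * e (some i) :=
        Finset.sum_le_sum fun i _ => by
          have := he (some i)
          simp only [hf]
          omega
      have hs2 : ∑ i : Fin g, 2 * e (some i) = 2 * ∑ i : Fin g, e (some i) := by
        rw [Finset.mul_sum]
      have h0 := he none
      have hgoal : ((fun x : Option (Fin g) => if x = none then d else 0)
          - divOf (oneVertexModel g) f) none
          = d - ∑ i : Fin g, (f none - f (some i)) * 2 := by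
        simp [divOf_ovm_none]
      rw [hgoal]
      omega
  | some i =>
      have := he (some i)
      have hgoal : ((fun x : Option (Fin g) => if x = none then d else 0)
          - divOf (oneVertexModel g) f) (some i)
          = 0 - (f (some i) - f none) * 2 := by
        simp [divOf_ovm_some]
      rw [hgoal]
      simp only [hf]
      omega

lemma ovm_rank_ub (g : ℕ) (d : ℤ) (K : ℕ) (hKg : K ≤ g) (hK : d < 2*(K:ℤ)) :
    ¬ rankGE (oneVertexModel g) (fun x : Option (Fin g) => if x = none then d else 0) K := by
  intro hr
  set e : Option (Fin g) → ℤ := fun x => match x with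
    | none => 0
    | some i => if (i:ℕ) < K then 1 else 0 with he_def
  have heff : ∀ v, 0 ≤ e v := by
    intro v
    match v with
    | none => simp [he_def]
    | some i => simp only [he_def]; split <;> omega
  have hsum : ∑ i : Fin g, e (some i) = (K : ℤ) := by
    simp only [he_def]
    exact sum_indicator_fin g K hKg
  have hdeg : degOf e = (K : ℤ) := by
    unfold degOf
    rw [Fintype.sum_option]
    simp only [he_def] at hsum ⊢
    rw [hsum]
    omega
  obtain ⟨d', ⟨f, hf⟩, hdom⟩ := hr e heff hdeg
  have hf' : ∀ v, d' v = (if v = none then d else 0) - divOf (oneVertexModel g) f v := by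
    intro v
    have := congrFun hf v
    simp only [Pi.sub_apply] at this
    omega
  have hptwise : ∀ i : Fin g, e (some i) ≤ f none - f (some i) := by
    intro i
    have h1 := hdom (some i)
    rw [hf' (some i), divOf_ovm_some] at h1
    simp only [reduceCtorEq, if_false] at h1
    have h2 := heff (some i)
    have h3 : e (some i) ≤ 1 := by
      simp only [he_def]; split <;> omega
    omega
  have hsum2 : (K : ℤ) ≤ ∑ i : Fin g, (f none - f (some i)) := by
    rw [← hsum]
    exact Finset.sum_le_sum fun i _ => hptwise i
  have hnone : e none ≤ d - (∑ i : Fin g, (f none - f (some i))) * 2 := by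
    have hn := hdom none
    rw [hf' none, divOf_ovm_none, ← Finset.sum_mul] at hn
    simpa using hn
  have h0 : (0:ℤ) ≤ e none := heff none
  omega

end Aux

/-- On a graph with a single vertex `v` of weight `h` and `g − h` loops at `v`
(`0 ≤ h ≤ g`, `g ≥ 2`), the divisor `d·v` with `0 ≤ d ≤ 2g − 2` has combinatorial
rank `⌊d/2⌋`; the rank is computed on the weightless loopless model `G•`. -/
theorem one_vertex_graph_rank (g h : ℕ) (hg : 2 ≤ g) (hh : h ≤ g)
    (d : ℤ) (hd0 : 0 ≤ d) (hd2 : d ≤ 2 * (g : ℤ) - 2) :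
    bnRank (oneVertexModel g)
      (fun x : Option (Fin g) => if x = none then d else 0) = d / 2 := by
  have hset : ({-1} ∪ {k : ℤ | 0 ≤ k ∧
      rankGE (oneVertexModel g) (fun x : Option (Fin g) => if x = none then d else 0) k.toNat})
      = Set.Icc (-1 : ℤ) (d / 2) := by
    ext x
    constructor
    · rintro (rfl | ⟨hx0, hxr⟩)
      · exact ⟨le_refl _, by omega⟩
      · refine ⟨by omega, ?_⟩
        by_contra hlt
        push_neg at hlt
        set K : ℕ := (d/2 + 1).toNat with hKdef
        have hKx : K ≤ x.toNat := by omega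
        have hrK : rankGE (oneVertexModel g)
            (fun x : Option (Fin g) => if x = none then d else 0) K :=
          rankGE_mono _ _ hKx hxr
        have hKg : K ≤ g := by omega
        have hKd : d < 2 * (K : ℤ) := by omega
        exact ovm_rank_ub g d K hKg hKd hrK
    · rintro ⟨h1, h2⟩
      rcases eq_or_lt_of_le h1 with heq | hlt
      · exact Or.inl heq.symm
      · refine Or.inr ⟨by omega, ovm_rank_lb g d x.toNat (by omega)⟩
  rw [bnRank, hset, csSup_Icc (by omega)]
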